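/- For every ε ∈ [0,1/4], the local part of the isotropic ε-PRB P^{1,ε} equals 4ε. -/

import Mathlib

open Finset

/-- n-bit strings. -/
abbrev Bits (n : ℕ) := Fin n → Bool

/-- A bipartite conditional "box" on n-bit alphabets: `P x y u v` is the
probability of outputs `(x, y)` given inputs `(u, v)`. -/
abbrev Box (n : ℕ) := Bits n → Bits n → Bits n → Bits n → ℝ

/-- `P` is a bipartite conditional probability distribution. -/
def IsBox {n : ℕ} (P : Box n) : Prop :=
  (∀ x y u v, 0 ≤ P x y u v) ∧
  (∀ u v, ∑ x : Bits n, ∑ y : Bits n, P x y u v = 1)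

/-- `P` is non-signalling. -/
def NonSignalling {n : ℕ} (P : Box n) : Prop :=
  (∀ y v u u', ∑ x : Bits n, P x y u v = ∑ x : Bits n, P x y u' v) ∧
  (∀ x u v v', ∑ y : Bits n, P x y u v = ∑ y : Bits n, P x y u v')

/-- The local deterministic box given by response functions `f` (Alice) and `g` (Bob). -/
def detBox {n : ℕ} (f g : Bits n → Bits n) : Box n :=
  fun x y u v => if x = f u ∧ y = g v then 1 else 0

/-- `P` is local deterministic. -/
def IsLocalDet {n : ℕ} (P : Box n) : Prop :=
  ∃ f g : Bits n → Bits n, P = detBox f g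

/-- `P` is local: a convex combination of local deterministic boxes. -/
def IsLocal {n : ℕ} (P : Box n) : Prop :=
  ∃ w : (Bits n → Bits n) × (Bits n → Bits n) → ℝ,
    (∀ fg, 0 ≤ w fg) ∧ (∑ fg, w fg = 1) ∧
    (∀ x y u v, P x y u v =
      ∑ fg : (Bits n → Bits n) × (Bits n → Bits n), w fg * detBox fg.1 fg.2 x y u v)

/-- The local part of `P`: the maximal weight `p` such that `P` is a convex
combination of a local box (weight `p`) and a non-signalling box (weight `1 - p`). -/
noncomputable def localPart {n : ℕ} (P : Box n) : ℝ :=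
  sSup {p : ℝ | 0 ≤ p ∧ p ≤ 1 ∧
    ∃ PL PNS : Box n, IsBox PL ∧ IsLocal PL ∧ IsBox PNS ∧ NonSignalling PNS ∧
      ∀ x y u v, P x y u v = p * PL x y u v + (1 - p) * PNS x y u v}

/-- Single-copy isotropic ε-PRB entries. -/
noncomputable def isoPRB1 (ε : ℝ) (x y u v : Bool) : ℝ :=
  if xor x y = (u && v) then (1 - ε) / 2 else ε / 2

/-- The system of n independent isotropic ε-PRBs. -/
noncomputable def isoPRB (n : ℕ) (ε : ℝ) : Box n :=
  fun x y u v => ∏ i : Fin n, isoPRB1 ε (x i) (y i) (u i) (v i)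

/-- Single-copy maximally biased δ-PRB entries. -/
noncomputable def biasedPRB1 (δ : ℝ) (x y u v : Bool) : ℝ :=
  if u && v then
    match x, y with
    | false, false => 0
    | true,  false => 1 / 2 - δ / 2
    | false, true  => 1 / 2 + δ / 2
    | true,  true  => 0
  else
    match x, y with
    | false, false => 1 / 2 - δ / 2
    | true,  false => 0
    | false, true  => δ
    | true,  true  => 1 / 2 - δ / 2

/-- The system of n independent maximally biased δ-PRBs. -/
noncomputable def biasedPRB (n : ℕ) (δ : ℝ) : Box n :=
  fun x y u v => ∏ i : Fin n, biasedPRB1 δ (x i) (y i) (u i) (v i)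

/-! ### Auxiliary material for the proof -/

def cb (b : Bool) : Bits 1 := fun _ => b

lemma bits_eq (x : Bits 1) : x = cb (x 0) :=
  funext fun i => congrArg x (Subsingleton.elim i 0)

@[simp] lemma cb_apply (b : Bool) (i : Fin 1) : cb b i = b := rfl

@[simp] lemma cb_inj {a b : Bool} : cb a = cb b ↔ a = b :=
  ⟨fun h => congrFun h 0, fun h => by rw [h]⟩

def E1 : Bool ≃ Bits 1 where
  toFun := cb
  invFun x := x 0
  left_inv _ := rfl
  right_inv x := (bits_eq x).symm

lemma sumBits (F : Bits 1 → ℝ) : ∑ x : Bits 1, F x = F (cb false) + F (cb true) := by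
  rw [← Equiv.sum_comp E1 F, Fintype.sum_bool]; exact add_comm _ _

def E2 : Bool × Bool ≃ (Bits 1 → Bits 1) where
  toFun p u := cb (cond (u 0) p.2 p.1)
  invFun f := (f (cb false) 0, f (cb true) 0)
  left_inv p := rfl
  right_inv f := by
    funext u
    have h := bits_eq u
    cases hb : u 0 <;> rw [hb] at h <;> rw [h] <;> exact (bits_eq _).symm

lemma E2_apply (p : Bool × Bool) (u : Bits 1) : E2 p u = cb (cond (u 0) p.2 p.1) := rfl

/-- The local box with winning probability 3/4, entrywise. -/
noncomputable def PL3 : Box 1 := fun x y u v =>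
  if xor (x 0) (y 0) = (u 0 && v 0) then 3/8 else 1/8

/-- The PR box. -/
noncomputable def PRb : Box 1 := fun x y u v =>
  if xor (x 0) (y 0) = (u 0 && v 0) then 1/2 else 0

def stratA (f : Bits 1 → Bits 1) (b : Bool) : Bool := f (cb b) 0
def winB (f g : Bits 1 → Bits 1) (bu bv : Bool) : Bool :=
  xor (stratA f bu) (stratA g bv) == (bu && bv)
def nwins (f g : Bits 1 → Bits 1) : ℕ :=
  (winB f g false false).toNat + (winB f g false true).toNat +
  (winB f g true false).toNat + (winB f g true true).toNat
noncomputable def wgt : (Bits 1 → Bits 1) × (Bits 1 → Bits 1) → ℝ := fun fg =>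
  if nwins fg.1 fg.2 = 3 then 1/8 else 0

lemma wgt_nonneg (fg) : 0 ≤ wgt fg := by
  unfold wgt; split <;> norm_num

lemma wgt_sum : ∑ fg : (Bits 1 → Bits 1) × (Bits 1 → Bits 1), wgt fg = 1 := by
  rw [← Equiv.sum_comp (E2.prodCongr E2) wgt]
  simp only [Equiv.prodCongr_apply, Fintype.sum_prod_type, Fintype.sum_bool]
  simp [wgt, nwins, winB, stratA, E2_apply, cb]
  norm_num

lemma PL3_rep : ∀ x y u v, PL3 x y u v =
    ∑ fg : (Bits 1 → Bits 1) × (Bits 1 → Bits 1), wgt fg * detBox fg.1 fg.2 x y u v := by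
  have key : ∀ bx by' bu bv : Bool, PL3 (cb bx) (cb by') (cb bu) (cb bv) =
      ∑ fg : (Bits 1 → Bits 1) × (Bits 1 → Bits 1),
        wgt fg * detBox fg.1 fg.2 (cb bx) (cb by') (cb bu) (cb bv) := by
    intro bx by' bu bv
    rw [← Equiv.sum_comp (E2.prodCongr E2)]
    simp only [Equiv.prodCongr_apply, Fintype.sum_prod_type, Fintype.sum_bool]
    cases bx <;> cases by' <;> cases bu <;> cases bv <;>
      simp [PL3, wgt, nwins, winB, stratA, detBox, E2_apply, cb] <;> norm_num
  intro x y u v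
  rw [bits_eq x, bits_eq y, bits_eq u, bits_eq v]
  exact key _ _ _ _

lemma PL3_local : IsLocal PL3 :=
  ⟨wgt, wgt_nonneg, wgt_sum, PL3_rep⟩

lemma PL3_box : IsBox PL3 := by
  constructor
  · intro x y u v; unfold PL3; split <;> norm_num
  · intro u v
    simp only [sumBits]
    cases hu : u 0 <;> cases hv : v 0 <;> simp [PL3, hu, hv] <;> norm_num

lemma PRb_box : IsBox PRb := by
  constructor
  · intro x y u v; unfold PRb; split <;> norm_num
  · intro u v
    simp only [sumBits]
    cases hu : u 0 <;> cases hv : v 0 <;> simp [PRb, hu, hv] <;> norm_num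

lemma PRb_margA (y u v : Bits 1) :
    PRb (cb false) y u v + PRb (cb true) y u v = 1/2 := by
  cases hy : y 0 <;> cases hu : u 0 <;> cases hv : v 0 <;>
    simp [PRb, hy, hu, hv] <;> norm_num

lemma PRb_margB (x u v : Bits 1) :
    PRb x (cb false) u v + PRb x (cb true) u v = 1/2 := by
  cases hx : x 0 <;> cases hu : u 0 <;> cases hv : v 0 <;>
    simp [PRb, hx, hu, hv] <;> norm_num

lemma PRb_ns : NonSignalling PRb := by
  constructor
  · intro y v u u'
    simp only [sumBits]
    rw [PRb_margA, PRb_margA]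
  · intro x u v v'
    simp only [sumBits]
    rw [PRb_margB, PRb_margB]

lemma iso_decomp (ε : ℝ) : ∀ x y u v, isoPRB 1 ε x y u v =
    (4 * ε) * PL3 x y u v + (1 - 4 * ε) * PRb x y u v := by
  intro x y u v
  unfold isoPRB PL3 PRb
  rw [Fin.prod_univ_one]
  unfold isoPRB1
  by_cases h : xor (x 0) (y 0) = (u 0 && v 0) <;> simp [h] <;> ring

/-! ### The error functional -/

noncomputable def bad (q : (Bits 1 × Bits 1) × Bits 1 × Bits 1) : ℝ :=
  if xor (q.1.1 0) (q.1.2 0) = (q.2.1 0 && q.2.2 0) then 0 else 1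

lemma bad_nonneg (q) : 0 ≤ bad q := by unfold bad; split <;> norm_num

noncomputable def Err (P : Box 1) : ℝ :=
  ∑ q : (Bits 1 × Bits 1) × Bits 1 × Bits 1, bad q * P q.1.1 q.1.2 q.2.1 q.2.2

lemma Err_nonneg (P : Box 1) (hP : ∀ x y u v, 0 ≤ P x y u v) : 0 ≤ Err P :=
  Finset.sum_nonneg fun q _ => mul_nonneg (bad_nonneg q) (hP _ _ _ _)

lemma Err_iso (ε : ℝ) : Err (isoPRB 1 ε) = 4 * ε := by
  unfold Err isoPRB
  simp only [Fintype.sum_prod_type, sumBits]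
  simp [bad, isoPRB1, cb]
  ring

lemma Err_det_ge_one (f g : Bits 1 → Bits 1) : 1 ≤ Err (detBox f g) := by
  have hex : ∃ bu bv : Bool, ¬ (xor (stratA f bu) (stratA g bv) = (bu && bv)) := by
    by_contra h
    push_neg at h
    have k : ∀ a a' b b' : Bool, xor a b = (false && false) → xor a b' = (false && true) →
        xor a' b = (true && false) → xor a' b' = (true && true) → False := by decide
    exact k _ _ _ _ (h false false) (h false true) (h true false) (h true true)
  obtain ⟨bu, bv, hlose⟩ := hex
  set q0 : (Bits 1 × Bits 1) × Bits 1 × Bits 1 := ((f (cb bu), g (cb bv)), (cb bu, cb bv))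
  have hterm : bad q0 * detBox f g q0.1.1 q0.1.2 q0.2.1 q0.2.2 = 1 := by
    have h1 : bad q0 = 1 := by
      show (if (f (cb bu) 0 ^^ g (cb bv) 0) = ((cb bu) 0 && (cb bv) 0) then (0:ℝ) else 1) = 1
      exact if_neg hlose
    have h2 : detBox f g q0.1.1 q0.1.2 q0.2.1 q0.2.2 = 1 := by
      unfold detBox
      simp [q0]
    rw [h1, h2]; norm_num
  calc (1:ℝ) = bad q0 * detBox f g q0.1.1 q0.1.2 q0.2.1 q0.2.2 := hterm.symm
    _ ≤ Err (detBox f g) := Finset.single_le_sum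
        (f := fun q => bad q * detBox f g q.1.1 q.1.2 q.2.1 q.2.2)
        (fun q _ => mul_nonneg (bad_nonneg q) (by unfold detBox; split <;> norm_num))
        (mem_univ q0)

lemma Err_local_rep (PL : Box 1) (w : (Bits 1 → Bits 1) × (Bits 1 → Bits 1) → ℝ)
    (hrep : ∀ x y u v, PL x y u v =
      ∑ fg : (Bits 1 → Bits 1) × (Bits 1 → Bits 1), w fg * detBox fg.1 fg.2 x y u v) :
    Err PL = ∑ fg : (Bits 1 → Bits 1) × (Bits 1 → Bits 1), w fg * Err (detBox fg.1 fg.2) := by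
  unfold Err
  calc ∑ q : (Bits 1 × Bits 1) × Bits 1 × Bits 1, bad q * PL q.1.1 q.1.2 q.2.1 q.2.2
      = ∑ q : (Bits 1 × Bits 1) × Bits 1 × Bits 1,
          ∑ fg : (Bits 1 → Bits 1) × (Bits 1 → Bits 1),
            w fg * (bad q * detBox fg.1 fg.2 q.1.1 q.1.2 q.2.1 q.2.2) := by
        refine Finset.sum_congr rfl fun q _ => ?_
        rw [hrep, Finset.mul_sum]
        exact Finset.sum_congr rfl fun fg _ => by ring
    _ = ∑ fg : (Bits 1 → Bits 1) × (Bits 1 → Bits 1),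
          ∑ q : (Bits 1 × Bits 1) × Bits 1 × Bits 1,
            w fg * (bad q * detBox fg.1 fg.2 q.1.1 q.1.2 q.2.1 q.2.2) := Finset.sum_comm
    _ = ∑ fg : (Bits 1 → Bits 1) × (Bits 1 → Bits 1),
          w fg * ∑ q : (Bits 1 × Bits 1) × Bits 1 × Bits 1,
            bad q * detBox fg.1 fg.2 q.1.1 q.1.2 q.2.1 q.2.2 := by
        exact Finset.sum_congr rfl fun fg _ => (Finset.mul_sum _ _ _).symm

lemma Err_split (ε p : ℝ) (PL PNS : Box 1)
    (heq : ∀ x y u v, isoPRB 1 ε x y u v = p * PL x y u v + (1 - p) * PNS x y u v) :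
    Err (isoPRB 1 ε) = p * Err PL + (1 - p) * Err PNS := by
  unfold Err
  have h : ∀ q : (Bits 1 × Bits 1) × Bits 1 × Bits 1,
      bad q * isoPRB 1 ε q.1.1 q.1.2 q.2.1 q.2.2 =
      p * (bad q * PL q.1.1 q.1.2 q.2.1 q.2.2) +
      (1 - p) * (bad q * PNS q.1.1 q.1.2 q.2.1 q.2.2) := by
    intro q; rw [heq]; ring
  rw [Finset.sum_congr rfl fun q _ => h q, Finset.sum_add_distrib,
    ← Finset.mul_sum, ← Finset.mul_sum]

/-- the local part of one isotropic ε-PRB is `4ε`. -/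
theorem stmt3 (ε : ℝ) (hε0 : 0 ≤ ε) (hε : ε ≤ 1 / 4) :
    localPart (isoPRB 1 ε) = 4 * ε := by
  unfold localPart
  apply IsGreatest.csSup_eq
  constructor
  · refine ⟨by linarith, by linarith, PL3, PRb, PL3_box, PL3_local, PRb_box, PRb_ns,
      iso_decomp ε⟩
  · rintro p ⟨hp0, hp1, PL, PNS, hPLbox, ⟨w, hw0, hwsum, hwrep⟩, hNSbox, _, heq⟩
    have hsplit := Err_split ε p PL PNS heq
    rw [Err_iso] at hsplit
    have hEPL : 1 ≤ Err PL := by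
      rw [Err_local_rep PL w hwrep]
      calc (1:ℝ) = ∑ fg : (Bits 1 → Bits 1) × (Bits 1 → Bits 1), w fg := hwsum.symm
        _ ≤ ∑ fg : (Bits 1 → Bits 1) × (Bits 1 → Bits 1), w fg * Err (detBox fg.1 fg.2) := by
            refine Finset.sum_le_sum fun fg _ => ?_
            calc w fg = w fg * 1 := (mul_one _).symm
              _ ≤ w fg * Err (detBox fg.1 fg.2) :=
                  mul_le_mul_of_nonneg_left (Err_det_ge_one _ _) (hw0 fg)
    have hEPNS : 0 ≤ Err PNS := Err_nonneg PNS hNSbox.1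
    nlinarith [mul_le_mul_of_nonneg_left hEPL hp0, mul_nonneg (by linarith : (0:ℝ) ≤ 1 - p) hEPNS]
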